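/- Under the setting of the previous statement with F additionally μ-strongly convex (μ > 0) and L-smooth, the fixed point satisfies ‖x*_η - x*‖² ≤ (1 + L/μ)·‖x̄*_η - x*_η‖² = η²(1 + L/μ)·‖L_W† ∇F(x*_η)‖², where L_W† denotes the Moore–Penrose pseudoinverse of L_W. -/

import Mathlib

open scoped RealInnerProductSpace

/-- Moore–Penrose pseudoinverse of a real symmetric matrix, via its spectral
decomposition (inverting the nonzero eigenvalues; recall `(0:ℝ)⁻¹ = 0`). -/
noncomputable def symmPinv {N : ℕ} (A : Matrix (Fin N) (Fin N) ℝ)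
    (hA : A.IsHermitian) : Matrix (Fin N) (Fin N) ℝ :=
  (hA.eigenvectorUnitary : Matrix (Fin N) (Fin N) ℝ) *
    Matrix.diagonal (fun i => (hA.eigenvalues i)⁻¹) *
    (star (hA.eigenvectorUnitary : Matrix (Fin N) (Fin N) ℝ))


open Matrix

lemma spec_real {N : ℕ} (A : Matrix (Fin N) (Fin N) ℝ) (hA : A.IsHermitian) :
    A = (hA.eigenvectorUnitary : Matrix (Fin N) (Fin N) ℝ) *
      Matrix.diagonal hA.eigenvalues *
      (star (hA.eigenvectorUnitary : Matrix (Fin N) (Fin N) ℝ)) := by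
  exact hA.spectral_theorem

lemma mul_symmPinv_mul {N : ℕ} (A : Matrix (Fin N) (Fin N) ℝ) (hA : A.IsHermitian) :
    A * symmPinv A hA * A = A := by
  set U := (hA.eigenvectorUnitary : Matrix (Fin N) (Fin N) ℝ) with hU
  have h1 : star U * U = 1 := Unitary.coe_star_mul_self _
  have cancel : ∀ X : Matrix (Fin N) (Fin N) ℝ, star U * (U * X) = X := fun X => by
    rw [← Matrix.mul_assoc, h1, Matrix.one_mul]
  have hd : ∀ i, hA.eigenvalues i * ((hA.eigenvalues i)⁻¹ * hA.eigenvalues i) = hA.eigenvalues i := by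
    intro i
    rcases eq_or_ne (hA.eigenvalues i) 0 with h | h <;> field_simp [h]
  calc A * symmPinv A hA * A
      = (U * Matrix.diagonal hA.eigenvalues * star U) *
        (U * Matrix.diagonal (fun i => (hA.eigenvalues i)⁻¹) * star U) *
        (U * Matrix.diagonal hA.eigenvalues * star U) := by
        rw [← spec_real A hA]; rfl
    _ = U * (Matrix.diagonal hA.eigenvalues *
          (Matrix.diagonal (fun i => (hA.eigenvalues i)⁻¹) *
            (Matrix.diagonal hA.eigenvalues * star U))) := by
        simp only [Matrix.mul_assoc, cancel]
    _ = U * (Matrix.diagonal hA.eigenvalues * star U) := by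
        rw [← Matrix.mul_assoc (Matrix.diagonal (fun i => (hA.eigenvalues i)⁻¹)),
          Matrix.diagonal_mul_diagonal,
          ← Matrix.mul_assoc (Matrix.diagonal hA.eigenvalues),
          Matrix.diagonal_mul_diagonal]
        have heq : (fun i => hA.eigenvalues i * ((hA.eigenvalues i)⁻¹ * hA.eigenvalues i))
            = hA.eigenvalues := funext hd
        rw [heq]
    _ = A := by rw [← Matrix.mul_assoc, ← spec_real A hA]

lemma symmPinv_mulVec_eq_zero {N : ℕ} (A : Matrix (Fin N) (Fin N) ℝ) (hA : A.IsHermitian)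
    (v : Fin N → ℝ) (hv : A.mulVec v = 0) : (symmPinv A hA).mulVec v = 0 := by
  set U := (hA.eigenvectorUnitary : Matrix (Fin N) (Fin N) ℝ) with hU
  have h1 : star U * U = 1 := Unitary.coe_star_mul_self _
  have hDw : Matrix.diagonal hA.eigenvalues *ᵥ (star U *ᵥ v) = 0 := by
    have hcomm : star U * A = Matrix.diagonal hA.eigenvalues * star U := by
      nth_rewrite 1 [spec_real A hA]
      rw [← Matrix.mul_assoc, ← Matrix.mul_assoc, h1, Matrix.one_mul]
    calc Matrix.diagonal hA.eigenvalues *ᵥ (star U *ᵥ v)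
        = (Matrix.diagonal hA.eigenvalues * star U) *ᵥ v := by rw [Matrix.mulVec_mulVec]
      _ = (star U * A) *ᵥ v := by rw [hcomm]
      _ = star U *ᵥ (A *ᵥ v) := by rw [Matrix.mulVec_mulVec]
      _ = 0 := by rw [hv, Matrix.mulVec_zero]
  have hD'w : Matrix.diagonal (fun i => (hA.eigenvalues i)⁻¹) *ᵥ (star U *ᵥ v) = 0 := by
    funext i
    have h := congrFun hDw i
    rw [Matrix.mulVec_diagonal] at h ⊢
    rcases eq_or_ne (hA.eigenvalues i) 0 with h0 | h0
    · simp [h0]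
    · have hz : (star U *ᵥ v) i = 0 := by
        have := mul_eq_zero.mp h
        tauto
      simp [hz]
  show (U * Matrix.diagonal (fun i => (hA.eigenvalues i)⁻¹) * star U) *ᵥ v = 0
  rw [Matrix.mul_assoc, ← Matrix.mulVec_mulVec, ← Matrix.mulVec_mulVec, hD'w, Matrix.mulVec_zero]

lemma symmPinv_transpose {N : ℕ} (A : Matrix (Fin N) (Fin N) ℝ) (hA : A.IsHermitian) :
    (symmPinv A hA)ᵀ = symmPinv A hA := by
  simp [symmPinv, Matrix.transpose_mul, Matrix.star_eq_conjTranspose,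
    Matrix.conjTranspose_eq_transpose_of_trivial, Matrix.mul_assoc]

lemma symmPinv_dot {N : ℕ} (A : Matrix (Fin N) (Fin N) ℝ) (hA : A.IsHermitian)
    (w v : Fin N → ℝ) (hv : A.mulVec v = 0) :
    dotProduct ((symmPinv A hA).mulVec w) v = 0 := by
  rw [dotProduct_comm, Matrix.dotProduct_mulVec, ← Matrix.mulVec_transpose,
    symmPinv_transpose, symmPinv_mulVec_eq_zero A hA v hv, zero_dotProduct]


/-- Distance of the D-GD fixed point to the true optimum: with `F` `μ`-strongly
convex and `Lsm`-smooth, `L_W` symmetric PSD with kernel the consensus space `S`,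
and `x*_η` the fixed point `η∇F(x*_η) + L_W x*_η = 0`,
`‖x*_η - x*‖² ≤ (1+Lsm/μ)‖x̄*_η - x*_η‖² = η²(1+Lsm/μ)‖L_W†∇F(x*_η)‖²`. -/
theorem fixed_point_distance_to_optimum (N : ℕ)
    (F : EuclideanSpace ℝ (Fin N) → ℝ) (hFdiff : Differentiable ℝ F)
    (μ Lsm : ℝ) (hμ : 0 < μ) (hLsm : 0 < Lsm)
    (hstrong : ∀ x y, F x + ⟪gradient F x, y - x⟫ + μ / 2 * ‖y - x‖ ^ 2 ≤ F y)
    (hsmooth : ∀ x y, F y ≤ F x + ⟪gradient F x, y - x⟫ + Lsm / 2 * ‖y - x‖ ^ 2)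
    (Lw : Matrix (Fin N) (Fin N) ℝ) (hLw : Lw.PosSemidef)
    (S : Submodule ℝ (EuclideanSpace ℝ (Fin N)))
    (hS : ∀ v : EuclideanSpace ℝ (Fin N), v ∈ S ↔ Lw.mulVec v = 0)
    (η : ℝ) (hη : 0 < η)
    (xs : EuclideanSpace ℝ (Fin N))
    (hfix : ∀ i, η * gradient F xs i + Lw.mulVec xs i = 0)
    (xbar : EuclideanSpace ℝ (Fin N))
    (hxbar : xbar = (S.orthogonalProjection xs : EuclideanSpace ℝ (Fin N)))
    (xstar : EuclideanSpace ℝ (Fin N)) (hxstarS : xstar ∈ S)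
    (hxstarMin : ∀ y ∈ S, F xstar ≤ F y) :
    ‖xs - xstar‖ ^ 2 ≤ (1 + Lsm / μ) * ‖xbar - xs‖ ^ 2 ∧
      ‖xbar - xs‖ ^ 2 =
        η ^ 2 * ‖(EuclideanSpace.equiv (Fin N) ℝ).symm
          ((symmPinv Lw hLw.1).mulVec (fun i => gradient F xs i))‖ ^ 2 := by
  have hη0 : η ≠ 0 := ne_of_gt hη
  have hsym : Lwᵀ = Lw := by
    have h := hLw.1
    rwa [Matrix.IsHermitian, Matrix.conjTranspose_eq_transpose_of_trivial] at h
  have hinner : ∀ x y : EuclideanSpace ℝ (Fin N),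
      ⟪x, y⟫ = dotProduct (fun i => x i) (fun i => y i) := by
    intro x y
    simp [PiLp.inner_apply, dotProduct, RCLike.inner_apply, conj_trivial, mul_comm]
  have hgrad2 : (fun i => gradient F xs i) = Matrix.mulVec Lw ((-(η⁻¹)) • (fun i => xs i)) := by
    rw [Matrix.mulVec_smul]
    funext i
    simp only [Pi.smul_apply, smul_eq_mul]
    have h := hfix i
    field_simp
    linarith
  -- gradient is orthogonal to S
  have hgS : ∀ w ∈ S, ⟪gradient F xs, w⟫ = 0 := by
    intro w hw
    have hw0 : Lw.mulVec w = 0 := (hS w).1 hw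
    rw [hinner]
    have hfe : (fun i => gradient F xs i) = (fun i => (gradient F xs) i) := rfl
    rw [show (fun i => (gradient F xs) i) = Matrix.mulVec Lw ((-(η⁻¹)) • (fun i => xs i)) from hgrad2]
    rw [dotProduct_comm, Matrix.dotProduct_mulVec, ← Matrix.mulVec_transpose, hsym]
    have : Lw *ᵥ (fun i => w i) = 0 := hw0
    rw [this, zero_dotProduct]
  have hxbarS : xbar ∈ S := by rw [hxbar]; exact (S.orthogonalProjection xs).2
  constructor
  · have h1 := hstrong xs xstar
    have h2 := hsmooth xs xbar
    have h3 := hxstarMin xbar hxbarS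
    have h0 : ⟪gradient F xs, xstar - xbar⟫ = 0 := hgS _ (S.sub_mem hxstarS hxbarS)
    have e1 : ⟪gradient F xs, xstar - xs⟫ = ⟪gradient F xs, xstar⟫ - ⟪gradient F xs, xs⟫ :=
      inner_sub_right _ _ _
    have e2 : ⟪gradient F xs, xbar - xs⟫ = ⟪gradient F xs, xbar⟫ - ⟪gradient F xs, xs⟫ :=
      inner_sub_right _ _ _
    have e3 : ⟪gradient F xs, xstar - xbar⟫ = ⟪gradient F xs, xstar⟫ - ⟪gradient F xs, xbar⟫ :=
      inner_sub_right _ _ _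
    have key : μ / 2 * ‖xstar - xs‖ ^ 2 ≤ Lsm / 2 * ‖xbar - xs‖ ^ 2 := by linarith
    have hb : (0:ℝ) ≤ ‖xbar - xs‖ ^ 2 := by positivity
    rw [norm_sub_rev]
    have hmul : μ * ((1 + Lsm / μ) * ‖xbar - xs‖ ^ 2)
        = μ * ‖xbar - xs‖ ^ 2 + Lsm * ‖xbar - xs‖ ^ 2 := by
      field_simp
    have hle : μ * ‖xstar - xs‖ ^ 2 ≤ μ * ((1 + Lsm / μ) * ‖xbar - xs‖ ^ 2) := by
      nlinarith [mul_nonneg (le_of_lt hμ) hb]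
    exact le_of_mul_le_mul_left hle hμ
  · set pv : Fin N → ℝ := (symmPinv Lw hLw.1).mulVec (fun i => gradient F xs i) with hpv
    set p : EuclideanSpace ℝ (Fin N) := (EuclideanSpace.equiv (Fin N) ℝ).symm pv with hpdef
    have hpi : ∀ i, p i = pv i := fun i => rfl
    have hLwp : Matrix.mulVec Lw pv = (fun i => gradient F xs i) := by
      rw [hpv, hgrad2, Matrix.mulVec_mulVec, Matrix.mulVec_mulVec, mul_symmPinv_mul Lw hLw.1]
    have hmem : xs + η • p ∈ S := by
      rw [hS]
      have e1 : Matrix.mulVec Lw (WithLp.ofLp (xs + η • p)) = Matrix.mulVec Lw ((fun j => xs j) + η • pv) := by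
        congr 1
      rw [e1, Matrix.mulVec_add, Matrix.mulVec_smul, hLwp]
      funext i
      have h := hfix i
      simp only [Pi.add_apply, Pi.smul_apply, smul_eq_mul, Pi.zero_apply]
      linarith
    have hortho : ∀ w ∈ S, ⟪xs - (xs + η • p), w⟫ = 0 := by
      intro w hw
      have hw0 : Lw.mulVec w = 0 := (hS w).1 hw
      have e : xs - (xs + η • p) = -(η • p) := by abel
      rw [e, inner_neg_left, real_inner_smul_left]
      have hz : ⟪p, w⟫ = 0 := by
        rw [hinner]
        have : (fun i => p i) = pv := funext hpi
        rw [this]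
        exact symmPinv_dot Lw hLw.1 _ _ hw0
      rw [hz, mul_zero, neg_zero]
    have hproj : (S.orthogonalProjection xs : EuclideanSpace ℝ (Fin N)) = xs + η • p :=
      Submodule.eq_starProjection_of_mem_of_inner_eq_zero hmem hortho
    rw [hxbar, hproj]
    have e2 : xs + η • p - xs = η • p := by abel
    rw [e2, norm_smul, Real.norm_eq_abs, mul_pow, sq_abs]
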